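/- Let m, n ≥ 3 with m ≠ n. Then the state complexity of Uₘ(a,b,∅) ⊕ Uₙ(a,b,∅) (symmetric difference) is exactly mn. -/

import Mathlib

namespace SCPaper

/-- Reversal of a language. -/
def rev {α : Type} (L : Language α) : Language α := {w | w.reverse ∈ L}

/-- Union of two languages. -/
def lunion {α : Type} (K L : Language α) : Language α := {w | w ∈ K ∨ w ∈ L}

/-- Intersection of two languages. -/
def linter {α : Type} (K L : Language α) : Language α := {w | w ∈ K ∧ w ∈ L}

/-- Difference of two languages. -/
def ldiff {α : Type} (K L : Language α) : Language α := {w | w ∈ K ∧ w ∉ L}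

/-- Symmetric difference of two languages. -/
def lsymm {α : Type} (K L : Language α) : Language α := lunion (ldiff K L) (ldiff L K)

/-- Sizes (numbers of states) of complete DFAs recognizing `L`. -/
def complexitySet {α : Type} (L : Language α) : Set ℕ :=
  {n | ∃ M : DFA α (Fin n), M.accepts = L}

/-- A language is regular if it is recognized by some finite DFA. -/
def Regular {α : Type} (L : Language α) : Prop := (complexitySet L).Nonempty

/-- State complexity: the number of states of a minimal DFA for `L`. -/
noncomputable def sc {α : Type} (L : Language α) : ℕ := sInf (complexitySet L)

/-- The cyclic permutation (0,1,…,n−1). -/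
def cyc (n : ℕ) (i : Fin n) : Fin n :=
  ⟨(i.val + 1) % n, Nat.mod_lt _ (Nat.lt_of_le_of_lt (Nat.zero_le _) i.isLt)⟩

/-- The transposition (0,1). -/
def tp01 (n : ℕ) (i : Fin n) : Fin n :=
  if i.val = 0 then ⟨1 % n, Nat.mod_lt _ (Nat.lt_of_le_of_lt (Nat.zero_le _) i.isLt)⟩
  else if i.val = 1 then ⟨0, Nat.lt_of_le_of_lt (Nat.zero_le _) i.isLt⟩
  else i

/-- The singular map sending n−1 to 0 and fixing everything else. -/
def sing (n : ℕ) (i : Fin n) : Fin n :=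
  if i.val = n - 1 then ⟨0, Nat.lt_of_le_of_lt (Nat.zero_le _) i.isLt⟩ else i

/-- The transposition (n−2, n−1). -/
def tpTop (n : ℕ) (i : Fin n) : Fin n :=
  if i.val = n - 1 then ⟨n - 2, by have := i.isLt; omega⟩
  else if i.val = n - 2 then ⟨n - 1, by have := i.isLt; omega⟩
  else i

/-- The singular map sending n−1 to n−2 and fixing everything else. -/
def singTop (n : ℕ) (i : Fin n) : Fin n :=
  if i.val = n - 1 then ⟨n - 2, by have := i.isLt; omega⟩ else i

/-- 𝒰ₙ(a,b,∅): binary alphabet, a = cycle (0,…,n−1), b = transposition (0,1),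
initial state 0, final state n−1. -/
def U2dfa (n : ℕ) (h : 0 < n) : DFA (Fin 2) (Fin n) where
  step := fun i x => if x = 0 then cyc n i else tp01 n i
  start := ⟨0, h⟩
  accept := {i | i.val = n - 1}

def U2 (n : ℕ) (h : 0 < n) : Language (Fin 2) := (U2dfa n h).accepts

/-- 𝒰ₙ(a,b,c): a = cycle, b = transposition (0,1), c = (n−1 ↦ 0). -/
def Udfa (n : ℕ) (h : 0 < n) : DFA (Fin 3) (Fin n) where
  step := fun i x => if x = 0 then cyc n i else if x = 1 then tp01 n i else sing n i
  start := ⟨0, h⟩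
  accept := {i | i.val = n - 1}

def U (n : ℕ) (h : 0 < n) : Language (Fin 3) := (Udfa n h).accepts

/-- 𝒰ₙ(a,b,c) with final state set {0}. -/
def U0dfa (n : ℕ) (h : 0 < n) : DFA (Fin 3) (Fin n) where
  step := fun i x => if x = 0 then cyc n i else if x = 1 then tp01 n i else sing n i
  start := ⟨0, h⟩
  accept := {i | i.val = 0}

def U0 (n : ℕ) (h : 0 < n) : Language (Fin 3) := (U0dfa n h).accepts

/-- 𝒰ₙ(a,b,c,d): a = cycle, b = transposition (0,1), c = (n−1 ↦ 0), d = identity. -/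
def U4dfa (n : ℕ) (h : 0 < n) : DFA (Fin 4) (Fin n) where
  step := fun i x =>
    if x = 0 then cyc n i else if x = 1 then tp01 n i else if x = 2 then sing n i else i
  start := ⟨0, h⟩
  accept := {i | i.val = n - 1}

def U4 (n : ℕ) (h : 0 < n) : Language (Fin 4) := (U4dfa n h).accepts

/-- 𝒰ₙ(d,c,b,a): d = cycle, c = transposition (0,1), b = (n−1 ↦ 0), a = identity. -/
def U4dcbaDfa (n : ℕ) (h : 0 < n) : DFA (Fin 4) (Fin n) where
  step := fun i x =>
    if x = 3 then cyc n i else if x = 2 then tp01 n i else if x = 1 then sing n i else i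
  start := ⟨0, h⟩
  accept := {i | i.val = n - 1}

def U4dcba (n : ℕ) (h : 0 < n) : Language (Fin 4) := (U4dcbaDfa n h).accepts

/-- 𝒱ₙ(a,b,c,d): a = cycle, b = transposition (n−2,n−1), c = (n−1 ↦ n−2), d = identity. -/
def Vdfa (n : ℕ) (h : 0 < n) : DFA (Fin 4) (Fin n) where
  step := fun i x =>
    if x = 0 then cyc n i else if x = 1 then tpTop n i else if x = 2 then singTop n i else i
  start := ⟨0, h⟩
  accept := {i | i.val = n - 1}

def V (n : ℕ) (h : 0 < n) : Language (Fin 4) := (Vdfa n h).accepts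

/-- 𝒱ₙ(d,c,b,a): d = cycle, c = transposition (n−2,n−1), b = (n−1 ↦ n−2), a = identity. -/
def VdcbaDfa (n : ℕ) (h : 0 < n) : DFA (Fin 4) (Fin n) where
  step := fun i x =>
    if x = 3 then cyc n i else if x = 2 then tpTop n i else if x = 1 then singTop n i else i
  start := ⟨0, h⟩
  accept := {i | i.val = n - 1}

def Vdcba (n : ℕ) (h : 0 < n) : Language (Fin 4) := (VdcbaDfa n h).accepts

/-- Direct product of two DFAs with a chosen set of final states. -/
def prodDFA {α σ₁ σ₂ : Type} (M : DFA α σ₁) (N : DFA α σ₂) (acc : Set (σ₁ × σ₂)) :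
    DFA α (σ₁ × σ₂) where
  step := fun p x => (M.step p.1 x, N.step p.2 x)
  start := (M.start, N.start)
  accept := acc


/-- Chinese-remainder style pairing k ↦ (k mod m, k mod n). -/
def toPair (m n : ℕ) (hm : 0 < m) (hn : 0 < n) (k : Fin (m * n)) : Fin m × Fin n :=
  (⟨k.val % m, Nat.mod_lt _ hm⟩, ⟨k.val % n, Nat.mod_lt _ hn⟩)

/-- Componentwise successor on the product of two cyclic automata. -/
def prodSucc (m n : ℕ) (p : Fin m × Fin n) : Fin m × Fin n := (cyc m p.1, cyc n p.2)

/-- One-letter subset transition of the reversed NFA of 𝒰ₙ(a,b,c). -/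
def rstep (n : ℕ) (h : 0 < n) (S : Set (Fin n)) (x : Fin 3) : Set (Fin n) :=
  {q | (Udfa n h).step q x ∈ S}

/-- Action of a word on subsets in the reversed NFA of 𝒰ₙ(a,b,c). -/
def rword (n : ℕ) (h : 0 < n) (S : Set (Fin n)) (w : List (Fin 3)) : Set (Fin n) :=
  w.foldl (rstep n h) S

end SCPaper

open SCPaper

open SCPaper



namespace SCAux

open Finset

lemma avoid (n m : ℕ) (hn : 3 ≤ n) (hnd : ¬ n ∣ m) (c : ℕ) :
    ∃ s, s ≤ 2 ∧ 2 ≤ (c + s * m) % n := by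
  have hn0 : 0 < n := by omega
  have hr0 : m % n ≠ 0 := fun h => hnd (Nat.dvd_of_mod_eq_zero h)
  set r := m % n with hrdef
  set d := c % n with hddef
  have hrlt : r < n := Nat.mod_lt _ hn0
  have hdlt : d < n := Nat.mod_lt _ hn0
  have val : ∀ s, (c + s * m) % n = (d + s * r) % n := by
    intro s
    conv_lhs => rw [Nat.add_mod, Nat.mul_mod]
    conv_rhs => rw [Nat.add_mod, Nat.mul_mod]
    rw [← hrdef, ← hddef, Nat.mod_eq_of_lt hdlt, Nat.mod_eq_of_lt hrlt]
  by_cases h0 : 2 ≤ d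
  · exact ⟨0, by omega, by rw [val]; simpa [Nat.mod_eq_of_lt hdlt] using h0⟩
  · by_cases h1 : 2 ≤ (d + r) % n
    · exact ⟨1, by omega, by rw [val, one_mul]; exact h1⟩
    · have hcase : (d = 0 ∧ r = 1) ∨ (d = 1 ∧ r = n - 1) := by
        rcases Nat.lt_or_ge (d + r) n with h | h
        · rw [Nat.mod_eq_of_lt h] at h1
          omega
        · rw [Nat.mod_eq_sub_mod h, Nat.mod_eq_of_lt (by omega)] at h1
          omega
      refine ⟨2, le_refl _, ?_⟩
      rw [val]
      rcases hcase with ⟨hd, hr⟩ | ⟨hd, hr⟩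
      · rw [hd, hr]
        simp [Nat.mod_eq_of_lt (show 2 < n by omega)]
      · rw [hd, hr]
        have h2 : 1 + 2 * (n - 1) = (n - 1) + 1 * n := by omega
        rw [h2, Nat.add_mul_mod_self_right, Nat.mod_eq_of_lt (by omega)]
        omega

lemma card_mod_eq (m N r : ℕ) (hr : r < m) :
    ((Finset.range (m * N)).filter (fun t => t % m = r)).card = N := by
  induction N with
  | zero => simp
  | succ N ih =>
    have hsplit : m * (N + 1) = m * N + m := by ring
    rw [hsplit, Finset.range_eq_Ico,
      ← Finset.Ico_union_Ico_eq_Ico (Nat.zero_le (m * N)) (Nat.le_add_right _ _),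
      Finset.filter_union,
      Finset.card_union_of_disjoint
        (Finset.disjoint_filter_filter (Finset.Ico_disjoint_Ico_consecutive _ _ _))]
    have h2 : (Finset.Ico (m * N) (m * N + m)).filter (fun t => t % m = r) = {m * N + r} := by
      ext t
      simp only [Finset.mem_filter, Finset.mem_Ico, Finset.mem_singleton]
      have key : ∀ u, u < m → (m * N + u) % m = u := by
        intro u hu
        rw [Nat.add_comm, Nat.add_mul_mod_self_left, Nat.mod_eq_of_lt hu]
      constructor
      · rintro ⟨⟨hl, hu⟩, hmod⟩
        obtain ⟨u, hul, rfl⟩ : ∃ u, u < m ∧ t = m * N + u := ⟨t - m * N, by omega, by omega⟩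
        rw [key u hul] at hmod
        omega
      · rintro rfl
        exact ⟨⟨by omega, by omega⟩, key r hr⟩
    rw [h2, ← Finset.range_eq_Ico, ih]
    simp

lemma card_mod_two (m N α β : ℕ) (hα : α < m) (hβ : β < m) (hne : α ≠ β) :
    ((Finset.range (m * N)).filter (fun t => t % m = α ∨ t % m = β)).card = 2 * N := by
  classical
  rw [Finset.filter_or, Finset.card_union_of_disjoint, card_mod_eq m N α hα,
    card_mod_eq m N β hβ]
  · ring
  · rw [Finset.disjoint_left]
    intro t ht1 ht2
    simp only [Finset.mem_filter] at ht1 ht2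
    exact hne (ht1.2 ▸ ht2.2)

lemma resid (m : ℕ) (hm : 0 < m) (i : Fin m) (t : ℕ) :
    ((i.val + t) % m = m - 1) ↔ (t % m = (m - 1) - i.val) := by
  have hi := i.isLt
  have hu : t % m < m := Nat.mod_lt _ hm
  rw [Nat.add_comm, ← Nat.mod_add_mod]
  rcases Nat.lt_or_ge (t % m + i.val) m with h | h
  · rw [Nat.mod_eq_of_lt h]; omega
  · rw [Nat.mod_eq_sub_mod h, Nat.mod_eq_of_lt (by omega)]; omega

lemma distinguish (m n : ℕ) (hm : 3 ≤ m) (hn : 3 ≤ n) (hmn : m ≠ n)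
    (i i' : Fin m) (j j' : Fin n) (hne : ¬ (i = i' ∧ j = j')) :
    ∃ t, ¬ (Xor' ((i.val + t) % m = m - 1) ((j.val + t) % n = n - 1) ↔
            Xor' ((i'.val + t) % m = m - 1) ((j'.val + t) % n = n - 1)) := by
  classical
  have hm0 : 0 < m := by omega
  have hn0 : 0 < n := by omega
  by_contra hc
  simp only [not_exists, not_not] at hc
  set α : ℕ := (m - 1) - i.val with hα
  set α' : ℕ := (m - 1) - i'.val with hα'
  set β : ℕ := (n - 1) - j.val with hβ
  set β' : ℕ := (n - 1) - j'.val with hβ'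
  have key : ∀ t, (¬ (t % m = α ↔ t % m = α')) ↔ (¬ (t % n = β ↔ t % n = β')) := by
    intro t
    have h := hc t
    rw [resid m hm0 i t, resid m hm0 i' t, resid n hn0 j t, resid n hn0 j' t] at h
    unfold Xor' Xor at h
    tauto
  have hSeq : (Finset.range (m * n)).filter (fun t => ¬ (t % m = α ↔ t % m = α'))
      = (Finset.range (m * n)).filter (fun t => ¬ (t % n = β ↔ t % n = β')) :=
    Finset.filter_congr (fun t _ => key t)
  have hi := i.isLt; have hi' := i'.isLt; have hj := j.isLt; have hj' := j'.isLt
  have cardm : i ≠ i' →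
      ((Finset.range (m * n)).filter (fun t => ¬ (t % m = α ↔ t % m = α'))).card = 2 * n := by
    intro hii
    have hαne : α ≠ α' := fun h => hii (Fin.ext (by omega))
    have hpt : ∀ t ∈ Finset.range (m * n),
        (¬ (t % m = α ↔ t % m = α')) ↔ (t % m = α ∨ t % m = α') := by
      intro t _
      constructor
      · intro h
        by_contra hor
        push_neg at hor
        exact h (iff_of_false hor.1 hor.2)
      · intro h hiff
        rcases h with h | h
        · have := hiff.mp h; omega
        · have := hiff.mpr h; omega
    rw [Finset.filter_congr hpt, card_mod_two m n α α' (by omega) (by omega) hαne]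
  have cardn : j ≠ j' →
      ((Finset.range (m * n)).filter (fun t => ¬ (t % n = β ↔ t % n = β'))).card = 2 * m := by
    intro hjj
    have hβne : β ≠ β' := fun h => hjj (Fin.ext (by omega))
    have hpt : ∀ t ∈ Finset.range (m * n),
        (¬ (t % n = β ↔ t % n = β')) ↔ (t % n = β ∨ t % n = β') := by
      intro t _
      constructor
      · intro h
        by_contra hor
        push_neg at hor
        exact h (iff_of_false hor.1 hor.2)
      · intro h hiff
        rcases h with h | h
        · have := hiff.mp h; omega
        · have := hiff.mpr h; omega
    rw [Finset.filter_congr hpt, Nat.mul_comm m n,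
      card_mod_two n m β β' (by omega) (by omega) hβne]
  have zerom : i = i' →
      ((Finset.range (m * n)).filter (fun t => ¬ (t % m = α ↔ t % m = α'))).card = 0 := by
    rintro rfl
    rw [Finset.filter_false_of_mem (fun t _ h => h Iff.rfl), Finset.card_empty]
  have zeron : j = j' →
      ((Finset.range (m * n)).filter (fun t => ¬ (t % n = β ↔ t % n = β'))).card = 0 := by
    rintro rfl
    rw [Finset.filter_false_of_mem (fun t _ h => h Iff.rfl), Finset.card_empty]
  have hcceq := congrArg Finset.card hSeq
  by_cases hii : i = i' <;> by_cases hjj : j = j'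
  · exact hne ⟨hii, hjj⟩
  · rw [zerom hii, cardn hjj] at hcceq; omega
  · rw [cardm hii, zeron hjj] at hcceq; omega
  · rw [cardm hii, cardn hjj] at hcceq; omega

end SCAux

section Main

open SCPaper SCAux

namespace SCAux

open SCPaper

/-- The product automaton for symmetric difference. -/
def P (m n : ℕ) (hm : 0 < m) (hn : 0 < n) : DFA (Fin 2) (Fin m × Fin n) :=
  prodDFA (U2dfa m hm) (U2dfa n hn) {p | Xor' (p.1.val = m - 1) (p.2.val = n - 1)}

lemma P_evalFrom (m n : ℕ) (hm : 0 < m) (hn : 0 < n) (w : List (Fin 2)) (p : Fin m × Fin n) :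
    (P m n hm hn).evalFrom p w =
      ((U2dfa m hm).evalFrom p.1 w, (U2dfa n hn).evalFrom p.2 w) := by
  induction w generalizing p with
  | nil => rfl
  | cons x w ih => exact ih _

lemma P_accepts (m n : ℕ) (hm : 0 < m) (hn : 0 < n) :
    (P m n hm hn).accepts = lsymm (U2 m hm) (U2 n hn) := by
  ext w
  have h := P_evalFrom m n hm hn w ((U2dfa m hm).start, (U2dfa n hn).start)
  constructor
  · intro hw
    have hw' : Xor' (((U2dfa m hm).eval w).val = m - 1) (((U2dfa n hn).eval w).val = n - 1) := by
      have hmem : (P m n hm hn).eval w ∈ (P m n hm hn).accept := hw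
      rwa [show (P m n hm hn).eval w =
        ((U2dfa m hm).eval w, (U2dfa n hn).eval w) from h] at hmem
    rcases hw' with ⟨h1, h2⟩ | ⟨h1, h2⟩
    · exact Or.inl ⟨h1, h2⟩
    · exact Or.inr ⟨h1, h2⟩
  · intro hw
    show (P m n hm hn).eval w ∈ (P m n hm hn).accept
    rw [show (P m n hm hn).eval w = ((U2dfa m hm).eval w, (U2dfa n hn).eval w) from h]
    rcases hw with ⟨h1, h2⟩ | ⟨h1, h2⟩
    · exact Or.inl ⟨h1, h2⟩
    · exact Or.inr ⟨h1, h2⟩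

lemma P_aPow (m n : ℕ) (hm : 0 < m) (hn : 0 < n) (t : ℕ) (p : Fin m × Fin n) :
    (P m n hm hn).evalFrom p (List.replicate t 0) =
      (⟨(p.1.val + t) % m, Nat.mod_lt _ hm⟩, ⟨(p.2.val + t) % n, Nat.mod_lt _ hn⟩) := by
  induction t generalizing p with
  | zero =>
      rcases p with ⟨x, y⟩
      simp [DFA.evalFrom, Prod.ext_iff, Fin.ext_iff, Nat.mod_eq_of_lt x.isLt,
        Nat.mod_eq_of_lt y.isLt]
  | succ t ih =>
      rw [List.replicate_succ]
      have hstep : (P m n hm hn).evalFrom p ((0 : Fin 2) :: List.replicate t 0)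
          = (P m n hm hn).evalFrom (cyc m p.1, cyc n p.2) (List.replicate t 0) := rfl
      rw [hstep, ih]
      refine Prod.ext (Fin.ext ?_) (Fin.ext ?_)
      · show ((p.1.val + 1) % m + t) % m = (p.1.val + (t + 1)) % m
        rw [Nat.mod_add_mod]
        congr 1
        omega
      · show ((p.2.val + 1) % n + t) % n = (p.2.val + (t + 1)) % n
        rw [Nat.mod_add_mod]
        congr 1
        omega

lemma P_b (m n : ℕ) (hm : 0 < m) (hn : 0 < n) (p : Fin m × Fin n) :
    (P m n hm hn).evalFrom p [1] = (tp01 m p.1, tp01 n p.2) := rfl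

lemma tp01_of_ge (n : ℕ) (i : Fin n) (h2 : 2 ≤ i.val) : tp01 n i = i := by
  unfold tp01
  rw [if_neg (by omega), if_neg (by omega)]

lemma tp01_zero (n : ℕ) (hn : 2 ≤ n) (i : Fin n) (h : i.val = 0) : (tp01 n i).val = 1 := by
  unfold tp01
  rw [if_pos h]
  exact Nat.mod_eq_of_lt (by omega)

lemma cyc_val (n : ℕ) (i : Fin n) : (cyc n i).val = (i.val + 1) % n := rfl

/-- Reachable states of the product automaton. -/
def Reach (m n : ℕ) (hm : 0 < m) (hn : 0 < n) : Set (Fin m × Fin n) :=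
  {p | ∃ w, (P m n hm hn).evalFrom (P m n hm hn).start w = p}

lemma reach_step (m n : ℕ) (hm : 0 < m) (hn : 0 < n) {p : Fin m × Fin n}
    (hp : p ∈ Reach m n hm hn) (w : List (Fin 2)) :
    (P m n hm hn).evalFrom p w ∈ Reach m n hm hn := by
  obtain ⟨wp, hwp⟩ := hp
  exact ⟨wp ++ w, by rw [DFA.evalFrom_of_append, hwp]⟩

/-- Key algebraic identity for the gadget. -/
lemma idA (m n x s : ℕ) (hx : x < m) (hs : s ≤ 2) (hn : 3 ≤ n) :
    ((m - x) + s * m) + (x + (n - 1 - s) * m) = m * n := by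
  have h1 : (m - x) + x = m := by omega
  have h2 : s + (n - 1 - s) = n - 1 := by omega
  have h3 : n - 1 + 1 = n := by omega
  calc ((m - x) + s * m) + (x + (n - 1 - s) * m)
      = ((m - x) + x) + (s * m + (n - 1 - s) * m) := by ring
    _ = m + (s + (n - 1 - s)) * m := by rw [h1, Nat.add_mul]
    _ = m + (n - 1) * m := by rw [h2]
    _ = (n - 1 + 1) * m := by ring
    _ = n * m := by rw [h3]
    _ = m * n := Nat.mul_comm _ _

lemma gadgetA (m n : ℕ) (hm : 3 ≤ m) (hn : 3 ≤ n) (hm0 : 0 < m) (hn0 : 0 < n)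
    (hnd : ¬ n ∣ m) (x : Fin m) (y : Fin n) (h : (x, y) ∈ Reach m n hm0 hn0) :
    (cyc m x, y) ∈ Reach m n hm0 hn0 := by
  obtain ⟨s, hs2, hs⟩ := avoid n m hn hnd (y.val + (m - x.val))
  set t := (m - x.val) + s * m with ht
  set sec := (y.val + (m - x.val) + s * m) % n with hsec
  have hsum : t + (x.val + (n - 1 - s) * m) = m * n := by
    rw [ht]
    exact idA m n x.val s x.isLt hs2 hn
  have htle : t ≤ m * n := by
    rw [← hsum]
    exact Nat.le_add_right _ _
  have hmt : m * n - t = x.val + (n - 1 - s) * m := by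
    rw [← hsum, Nat.add_sub_cancel_left]
  have hseclt : sec < n := Nat.mod_lt _ hn0
  have e1 : (P m n hm0 hn0).evalFrom (x, y) (List.replicate t 0)
      = (⟨0, hm0⟩, ⟨sec, hseclt⟩) := by
    rw [P_aPow]
    refine Prod.ext (Fin.ext ?_) (Fin.ext ?_)
    · show (x.val + t) % m = 0
      have hxt : x.val + t = (1 + s) * m := by
        rw [ht, ← Nat.add_assoc, Nat.add_sub_cancel' (le_of_lt x.isLt), Nat.add_mul, Nat.one_mul]
      rw [hxt, Nat.mul_mod_left]
    · show (y.val + t) % n = sec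
      rw [hsec, ht, ← Nat.add_assoc]
  have e2 : (P m n hm0 hn0).evalFrom (⟨0, hm0⟩, ⟨sec, hseclt⟩) [1]
      = (⟨1, by omega⟩, ⟨sec, hseclt⟩) := by
    rw [P_b]
    refine Prod.ext (Fin.ext ?_) (Fin.ext ?_)
    · exact tp01_zero m (by omega) _ rfl
    · rw [tp01_of_ge n _ (by exact hs)]
  have e3 : (P m n hm0 hn0).evalFrom (⟨1, by omega⟩, ⟨sec, hseclt⟩)
      (List.replicate (m * n - t) 0) = (cyc m x, y) := by
    rw [P_aPow]
    refine Prod.ext (Fin.ext ?_) (Fin.ext ?_)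
    · show (1 + (m * n - t)) % m = (cyc m x).val
      rw [hmt, ← Nat.add_assoc, Nat.add_mul_mod_self_right, cyc_val, Nat.add_comm]
    · show (sec + (m * n - t)) % n = y.val
      rw [hsec, Nat.mod_add_mod]
      have hyt : y.val + (m - x.val) + s * m + (m * n - t) = y.val + m * n := by
        rw [Nat.add_assoc y.val (m - x.val), ← ht, Nat.add_assoc, Nat.add_sub_cancel' htle]
      rw [hyt, Nat.add_mul_mod_self_right]
      exact Nat.mod_eq_of_lt y.isLt
  have hw : (P m n hm0 hn0).evalFrom (x, y)
      (List.replicate t 0 ++ ([1] ++ List.replicate (m * n - t) 0)) = (cyc m x, y) := by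
    rw [DFA.evalFrom_of_append, e1, DFA.evalFrom_of_append, e2, e3]
  rw [← hw]
  exact reach_step m n hm0 hn0 h _

lemma gadgetB (m n : ℕ) (hm : 3 ≤ m) (hn : 3 ≤ n) (hm0 : 0 < m) (hn0 : 0 < n)
    (hnd : ¬ m ∣ n) (x : Fin m) (y : Fin n) (h : (x, y) ∈ Reach m n hm0 hn0) :
    (x, cyc n y) ∈ Reach m n hm0 hn0 := by
  obtain ⟨s, hs2, hs⟩ := avoid m n hm hnd (x.val + (n - y.val))
  set t := (n - y.val) + s * n with ht
  set sec := (x.val + (n - y.val) + s * n) % m with hsec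
  have hsum : t + (y.val + (m - 1 - s) * n) = m * n := by
    rw [ht, Nat.mul_comm m n]
    exact idA n m y.val s y.isLt hs2 hm
  have htle : t ≤ m * n := by
    rw [← hsum]
    exact Nat.le_add_right _ _
  have hmt : m * n - t = y.val + (m - 1 - s) * n := by
    rw [← hsum, Nat.add_sub_cancel_left]
  have hseclt : sec < m := Nat.mod_lt _ hm0
  have e1 : (P m n hm0 hn0).evalFrom (x, y) (List.replicate t 0)
      = (⟨sec, hseclt⟩, ⟨0, hn0⟩) := by
    rw [P_aPow]
    refine Prod.ext (Fin.ext ?_) (Fin.ext ?_)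
    · show (x.val + t) % m = sec
      rw [hsec, ht, ← Nat.add_assoc]
    · show (y.val + t) % n = 0
      have hyt : y.val + t = (1 + s) * n := by
        rw [ht, ← Nat.add_assoc, Nat.add_sub_cancel' (le_of_lt y.isLt), Nat.add_mul, Nat.one_mul]
      rw [hyt, Nat.mul_mod_left]
  have e2 : (P m n hm0 hn0).evalFrom (⟨sec, hseclt⟩, ⟨0, hn0⟩) [1]
      = (⟨sec, hseclt⟩, ⟨1, by omega⟩) := by
    rw [P_b]
    refine Prod.ext (Fin.ext ?_) (Fin.ext ?_)
    · rw [tp01_of_ge m _ (by exact hs)]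
    · exact tp01_zero n (by omega) _ rfl
  have e3 : (P m n hm0 hn0).evalFrom (⟨sec, hseclt⟩, ⟨1, by omega⟩)
      (List.replicate (m * n - t) 0) = (x, cyc n y) := by
    rw [P_aPow]
    refine Prod.ext (Fin.ext ?_) (Fin.ext ?_)
    · show (sec + (m * n - t)) % m = x.val
      rw [hsec, Nat.mod_add_mod]
      have hxt : x.val + (n - y.val) + s * n + (m * n - t) = x.val + m * n := by
        rw [Nat.add_assoc x.val (n - y.val), ← ht, Nat.add_assoc, Nat.add_sub_cancel' htle]
      rw [hxt, Nat.mul_comm m n, Nat.add_mul_mod_self_right]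
      exact Nat.mod_eq_of_lt x.isLt
    · show (1 + (m * n - t)) % n = (cyc n y).val
      rw [hmt, ← Nat.add_assoc, Nat.add_mul_mod_self_right, cyc_val, Nat.add_comm]
  have hw : (P m n hm0 hn0).evalFrom (x, y)
      (List.replicate t 0 ++ ([1] ++ List.replicate (m * n - t) 0)) = (x, cyc n y) := by
    rw [DFA.evalFrom_of_append, e1, DFA.evalFrom_of_append, e2, e3]
  rw [← hw]
  exact reach_step m n hm0 hn0 h _

lemma chainA (m n : ℕ) (hm : 3 ≤ m) (hn : 3 ≤ n) (hm0 : 0 < m) (hn0 : 0 < n)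
    (hnd : ¬ n ∣ m) (k : ℕ) :
    ((⟨k % m, Nat.mod_lt _ hm0⟩ : Fin m), (⟨0, hn0⟩ : Fin n)) ∈ Reach m n hm0 hn0 := by
  induction k with
  | zero =>
      have : ((⟨0 % m, Nat.mod_lt _ hm0⟩ : Fin m), (⟨0, hn0⟩ : Fin n))
          = (P m n hm0 hn0).start := by
        refine Prod.ext (Fin.ext ?_) rfl
        exact Nat.zero_mod m
      rw [this]
      exact ⟨[], rfl⟩
  | succ k ih =>
      have hg := gadgetA m n hm hn hm0 hn0 hnd _ _ ih
      have : (cyc m (⟨k % m, Nat.mod_lt _ hm0⟩ : Fin m))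
          = (⟨(k + 1) % m, Nat.mod_lt _ hm0⟩ : Fin m) := by
        refine Fin.ext ?_
        rw [cyc_val]
        exact Nat.mod_add_mod k m 1
      rwa [this] at hg

lemma chainB (m n : ℕ) (hm : 3 ≤ m) (hn : 3 ≤ n) (hm0 : 0 < m) (hn0 : 0 < n)
    (hnd : ¬ m ∣ n) (k : ℕ) :
    ((⟨0, hm0⟩ : Fin m), (⟨k % n, Nat.mod_lt _ hn0⟩ : Fin n)) ∈ Reach m n hm0 hn0 := by
  induction k with
  | zero =>
      have : ((⟨0, hm0⟩ : Fin m), (⟨0 % n, Nat.mod_lt _ hn0⟩ : Fin n))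
          = (P m n hm0 hn0).start := by
        refine Prod.ext rfl (Fin.ext ?_)
        exact Nat.zero_mod n
      rw [this]
      exact ⟨[], rfl⟩
  | succ k ih =>
      have hg := gadgetB m n hm hn hm0 hn0 hnd _ _ ih
      have : (cyc n (⟨k % n, Nat.mod_lt _ hn0⟩ : Fin n))
          = (⟨(k + 1) % n, Nat.mod_lt _ hn0⟩ : Fin n) := by
        refine Fin.ext ?_
        rw [cyc_val]
        exact Nat.mod_add_mod k n 1
      rwa [this] at hg

lemma reach_all (m n : ℕ) (hm : 3 ≤ m) (hn : 3 ≤ n) (hmn : m ≠ n) (hm0 : 0 < m) (hn0 : 0 < n)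
    (p : Fin m × Fin n) : p ∈ Reach m n hm0 hn0 := by
  obtain ⟨i, j⟩ := p
  have hdvd : ¬ n ∣ m ∨ ¬ m ∣ n := by
    by_contra hc
    push_neg at hc
    exact hmn (Nat.dvd_antisymm hc.2 hc.1)
  rcases hdvd with hnd | hnd
  · have hc := chainA m n hm hn hm0 hn0 hnd (i.val + m * n - j.val)
    have hr := reach_step m n hm0 hn0 hc (List.replicate j.val 0)
    rw [P_aPow] at hr
    have he : ((⟨((i.val + m * n - j.val) % m + j.val) % m, Nat.mod_lt _ hm0⟩ : Fin m),
        (⟨(0 + j.val) % n, Nat.mod_lt _ hn0⟩ : Fin n)) = (i, j) := by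
      have hj : j.val ≤ m * n :=
        le_of_lt (lt_of_lt_of_le j.isLt (Nat.le_mul_of_pos_left n hm0))
      refine Prod.ext (Fin.ext ?_) (Fin.ext ?_)
      · show ((i.val + m * n - j.val) % m + j.val) % m = i.val
        rw [Nat.mod_add_mod]
        have hcancel : i.val + m * n - j.val + j.val = i.val + m * n :=
          Nat.sub_add_cancel (le_trans hj (Nat.le_add_left _ _))
        rw [hcancel, Nat.add_mul_mod_self_left]
        exact Nat.mod_eq_of_lt i.isLt
      · show (0 + j.val) % n = j.val
        rw [Nat.zero_add]
        exact Nat.mod_eq_of_lt j.isLt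
    rwa [he] at hr
  · have hc := chainB m n hm hn hm0 hn0 hnd (j.val + m * n - i.val)
    have hr := reach_step m n hm0 hn0 hc (List.replicate i.val 0)
    rw [P_aPow] at hr
    have he : ((⟨(0 + i.val) % m, Nat.mod_lt _ hm0⟩ : Fin m),
        (⟨((j.val + m * n - i.val) % n + i.val) % n, Nat.mod_lt _ hn0⟩ : Fin n)) = (i, j) := by
      have hi : i.val ≤ m * n :=
        le_of_lt (lt_of_lt_of_le i.isLt (Nat.le_mul_of_pos_right m hn0))
      refine Prod.ext (Fin.ext ?_) (Fin.ext ?_)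
      · show (0 + i.val) % m = i.val
        rw [Nat.zero_add]
        exact Nat.mod_eq_of_lt i.isLt
      · show ((j.val + m * n - i.val) % n + i.val) % n = j.val
        rw [Nat.mod_add_mod]
        have hcancel : j.val + m * n - i.val + i.val = j.val + m * n :=
          Nat.sub_add_cancel (le_trans hi (Nat.le_add_left _ _))
        rw [hcancel, Nat.add_mul_mod_self_right]
        exact Nat.mod_eq_of_lt j.isLt
    rwa [he] at hr

/-- Transporting a DFA along an equivalence of state types. -/
def reDFA {α σ τ : Type} (e : σ ≃ τ) (M : DFA α σ) : DFA α τ where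
  step := fun q x => e (M.step (e.symm q) x)
  start := e M.start
  accept := {q | e.symm q ∈ M.accept}

lemma reDFA_evalFrom {α σ τ : Type} (e : σ ≃ τ) (M : DFA α σ) (w : List α) (s : σ) :
    (reDFA e M).evalFrom (e s) w = e (M.evalFrom s w) := by
  induction w generalizing s with
  | nil => rfl
  | cons x w ih =>
      show (reDFA e M).evalFrom ((reDFA e M).step (e s) x) w = _
      have hstep : (reDFA e M).step (e s) x = e (M.step s x) := by
        show e (M.step (e.symm (e s)) x) = e (M.step s x)
        rw [e.symm_apply_apply]
      rw [hstep, ih]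
      rfl

lemma reDFA_accepts {α σ τ : Type} (e : σ ≃ τ) (M : DFA α σ) :
    (reDFA e M).accepts = M.accepts := by
  ext w
  have h : (reDFA e M).eval w = e (M.eval w) := reDFA_evalFrom e M w M.start
  constructor
  · intro hw
    have hmem : (reDFA e M).eval w ∈ (reDFA e M).accept := hw
    rw [h] at hmem
    have : e.symm (e (M.eval w)) ∈ M.accept := hmem
    rwa [e.symm_apply_apply] at this
  · intro hw
    show (reDFA e M).eval w ∈ (reDFA e M).accept
    rw [h]
    show e.symm (e (M.eval w)) ∈ M.accept
    rwa [e.symm_apply_apply]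

end SCAux


theorem symmdiff_same_stream_tight (m n : ℕ) (hm : 3 ≤ m) (hn : 3 ≤ n) (hmn : m ≠ n) :
    sc (lsymm (U2 m (by omega)) (U2 n (by omega))) = m * n := by
  classical
  have hm0 : 0 < m := by omega
  have hn0 : 0 < n := by omega
  have hmem : m * n ∈ complexitySet (lsymm (U2 m hm0) (U2 n hn0)) := by
    refine ⟨SCAux.reDFA finProdFinEquiv (SCAux.P m n hm0 hn0), ?_⟩
    rw [SCAux.reDFA_accepts, SCAux.P_accepts]
  have hlb : ∀ k ∈ complexitySet (lsymm (U2 m hm0) (U2 n hn0)), m * n ≤ k := by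
    rintro k ⟨Mk, hMk⟩
    have hMk' : Mk.accepts = (SCAux.P m n hm0 hn0).accepts := by
      rw [hMk, SCAux.P_accepts]
    have hre : ∀ p : Fin m × Fin n,
        ∃ w, (SCAux.P m n hm0 hn0).evalFrom (SCAux.P m n hm0 hn0).start w = p :=
      fun p => SCAux.reach_all m n hm hn hmn hm0 hn0 p
    choose wd hwd using hre
    have key : ∀ (pp : Fin m × Fin n) (z : List (Fin 2)),
        ((wd pp ++ z) ∈ Mk.accepts ↔ Mk.evalFrom (Mk.evalFrom Mk.start (wd pp)) z ∈ Mk.accept) := by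
      intro pp z
      rw [DFA.mem_accepts]
      show Mk.evalFrom Mk.start (wd pp ++ z) ∈ _ ↔ _
      rw [DFA.evalFrom_of_append]
    have keyP : ∀ (pp : Fin m × Fin n) (z : List (Fin 2)),
        ((wd pp ++ z) ∈ Mk.accepts ↔
          (SCAux.P m n hm0 hn0).evalFrom pp z ∈ (SCAux.P m n hm0 hn0).accept) := by
      intro pp z
      rw [hMk', DFA.mem_accepts]
      show (SCAux.P m n hm0 hn0).evalFrom (SCAux.P m n hm0 hn0).start (wd pp ++ z) ∈ _ ↔ _
      rw [DFA.evalFrom_of_append, hwd]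
    have hinj : Function.Injective (fun p : Fin m × Fin n => Mk.evalFrom Mk.start (wd p)) := by
      rintro ⟨i, j⟩ ⟨i', j'⟩ hpq
      simp only at hpq
      by_contra hne
      have hne' : ¬ (i = i' ∧ j = j') := by
        rintro ⟨rfl, rfl⟩
        exact hne rfl
      obtain ⟨t, hd⟩ := SCAux.distinguish m n hm hn hmn i i' j j' hne'
      apply hd
      have hsame : (SCAux.P m n hm0 hn0).evalFrom (i, j) (List.replicate t 0)
            ∈ (SCAux.P m n hm0 hn0).accept ↔
          (SCAux.P m n hm0 hn0).evalFrom (i', j') (List.replicate t 0)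
            ∈ (SCAux.P m n hm0 hn0).accept := by
        rw [← keyP (i, j) _, ← keyP (i', j') _, key (i, j) _, key (i', j') _, hpq]
      rw [SCAux.P_aPow, SCAux.P_aPow] at hsame
      exact hsame
    calc m * n = Fintype.card (Fin m × Fin n) := by simp
      _ ≤ Fintype.card (Fin k) := Fintype.card_le_of_injective _ hinj
      _ = k := Fintype.card_fin k
  show sInf (complexitySet (lsymm (U2 m hm0) (U2 n hn0))) = m * n
  exact le_antisymm (Nat.sInf_le hmem) (le_csInf ⟨_, hmem⟩ hlb)
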